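/- Stability plus convergence estimate: under the hypotheses of the previous statements, for exact data g with initial value u_α(·,0) = f₀ and noisy data g̃ with ‖g−g̃‖ ≤ δ, one has ‖f₀ − R_{t,α} g̃‖ ≤ ‖f₀ − u_α(·,t)‖ + (C₂(1+τ^α)/C₁)(δ/t^α), where the first term tends to 0 as t → 0. -/

import Mathlib

open scoped RealInnerProductSpace

/-- The (real-valued) Mittag-Leffler function `E_α(x) = ∑ x^k / Γ(αk+1)`. -/
noncomputable def mittagLeffler (α x : ℝ) : ℝ :=
  ∑' k : ℕ, x ^ k / Real.Gamma (α * k + 1)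

section Aux

variable {H : Type*} [NormedAddCommGroup H] [InnerProductSpace ℝ H] [CompleteSpace H]

lemma aux_hasSum_inner_smul (φ : HilbertBasis ℕ ℝ H) (x : H) :
    HasSum (fun n => ⟪x, φ n⟫ • φ n) x := by
  have := φ.hasSum_repr x
  simp only [φ.repr_apply_apply] at this
  simpa [real_inner_comm] using this

lemma aux_coeff (φ : HilbertBasis ℕ ℝ H) {c : ℕ → ℝ} {y : H}
    (hy : HasSum (fun n => c n • φ n) y) (m : ℕ) : ⟪y, φ m⟫ = c m := by
  have h := hy.mapL (innerSL ℝ (φ m))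
  have horth := φ.orthonormal
  rw [orthonormal_iff_ite] at horth
  have h2 : HasSum (fun n => if n = m then c m else 0) ⟪φ m, y⟫ := by
    refine h.congr_fun fun n => ?_
    simp only [innerSL_apply_apply, real_inner_smul_right, horth m n]
    by_cases hnm : n = m
    · subst hnm; simp
    · simp [hnm, Ne.symm hnm]
  have := h2.tsum_eq
  rw [tsum_ite_eq] at this
  rw [real_inner_comm, ← this]

lemma aux_sq_hasSum (φ : HilbertBasis ℕ ℝ H) {c : ℕ → ℝ} {y : H}
    (hy : HasSum (fun n => c n • φ n) y) :
    HasSum (fun n => c n ^ 2) (‖y‖ ^ 2) := by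
  have hc2 : ∀ n, (⟪y, φ n⟫ : ℝ) = c n := aux_coeff φ hy
  have h := φ.hasSum_inner_mul_inner y y
  rw [real_inner_self_eq_norm_sq] at h
  refine h.congr_fun fun n => ?_
  rw [← hc2 n, real_inner_comm (φ n) y]; ring

lemma aux_summable_smul (φ : HilbertBasis ℕ ℝ H) {c : ℕ → ℝ}
    (h : Summable fun n => c n ^ 2) : Summable fun n => c n • φ n := by
  have hmem : Memℓp c 2 := by
    apply memℓp_gen
    have h2 : ((2 : ENNReal).toReal) = ((2 : ℕ) : ℝ) := by norm_num
    have : ∀ i : ℕ, ‖c i‖ ^ ((2 : ENNReal).toReal) = c i ^ 2 := fun i => by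
      rw [h2, Real.rpow_natCast, Real.norm_eq_abs, sq_abs]
    simpa [this] using h
  exact (φ.hasSum_repr_symm ⟨c, hmem⟩).summable

end Aux

set_option maxHeartbeats 2000000 in
/-- Theorem 5.2: for exact data `g` with initial value `f₀`
(`⟨g,φ_n⟩ = E_α(−λ_n²τ^α)⟨f₀,φ_n⟩`, `λ_n = n+1`) and noisy data `g̃` with `‖g − g̃‖ ≤ δ`,
the regularized solutions `u(t) = R_{t,α} g`, `ũ(t) = R_{t,α} g̃` satisfy, for `0 < t < τ`,
`‖f₀ − ũ(t)‖ ≤ ‖f₀ − u(t)‖ + (C₂(1+τ^α)/C₁)(δ/t^α)`, and `‖f₀ − u(t)‖ → 0` as `t → 0⁺`. -/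
theorem stability_plus_convergence
    {H : Type*} [NormedAddCommGroup H] [InnerProductSpace ℝ H] [CompleteSpace H]
    (φ : HilbertBasis ℕ ℝ H)
    (α τ C C₁ C₂ δ : ℝ) (hα : 0 < α) (hα1 : α < 1) (hτ : 0 < τ)
    (hC : 0 < C) (hC₁ : 0 < C₁) (hC₁₂ : C₁ ≤ C₂) (hδ : 0 < δ)
    (hbd : ∀ x : ℝ, 0 < x →
      C₁ / (Real.Gamma (1 - α) * (1 + x)) ≤ mittagLeffler α (-x) ∧
      mittagLeffler α (-x) ≤ C₂ / (Real.Gamma (1 - α) * (1 + x)))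
    (hbd1 : ∀ l t : ℝ, 0 < l → 0 < t → |mittagLeffler α (-(l ^ 2 * t ^ α)) - 1| ≤ C)
    (hlim : ∀ l : ℝ, 0 < l →
      Filter.Tendsto (fun t : ℝ => mittagLeffler α (-(l ^ 2 * t ^ α)))
        (nhdsWithin 0 (Set.Ioi 0)) (nhds 1))
    (f₀ g g' : H)
    (hf₀ : ∀ n : ℕ, ⟪g, φ n⟫ = mittagLeffler α (-((n + 1 : ℝ) ^ 2 * τ ^ α)) * ⟪f₀, φ n⟫)
    (hnoise : ‖g - g'‖ ≤ δ)
    (u u' : ℝ → H)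
    (hu : ∀ t : ℝ, 0 < t → t < τ → u t = ∑' n : ℕ,
      (mittagLeffler α (-((n + 1 : ℝ) ^ 2 * t ^ α)) /
        mittagLeffler α (-((n + 1 : ℝ) ^ 2 * τ ^ α)) * ⟪g, φ n⟫) • φ n)
    (hu' : ∀ t : ℝ, 0 < t → t < τ → u' t = ∑' n : ℕ,
      (mittagLeffler α (-((n + 1 : ℝ) ^ 2 * t ^ α)) /
        mittagLeffler α (-((n + 1 : ℝ) ^ 2 * τ ^ α)) * ⟪g', φ n⟫) • φ n) :
    (∀ t : ℝ, 0 < t → t < τ →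
      ‖f₀ - u' t‖ ≤ ‖f₀ - u t‖ + (C₂ * (1 + τ ^ α) / C₁) * (δ / t ^ α)) ∧
    Filter.Tendsto (fun t : ℝ => ‖f₀ - u t‖) (nhdsWithin 0 (Set.Ioi 0)) (nhds 0) := by
  classical
  have hC₂ : 0 < C₂ := lt_of_lt_of_le hC₁ hC₁₂
  set m : ℝ → ℕ → ℝ := fun t n => mittagLeffler α (-((n + 1 : ℝ) ^ 2 * t ^ α)) with hm
  have hG : 0 < Real.Gamma (1 - α) := Real.Gamma_pos_of_pos (by linarith)
  have hr : 0 < τ ^ α := Real.rpow_pos_of_pos hτ α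
  have hL : ∀ n : ℕ, (1 : ℝ) ≤ ((n : ℝ) + 1) ^ 2 := fun n => by
    have h0 : (0 : ℝ) ≤ (n : ℝ) := Nat.cast_nonneg n
    nlinarith
  -- positivity and bounds of m
  have hmpos : ∀ (s : ℝ), 0 < s → ∀ n, 0 < m s n := by
    intro s hs n
    have hx : 0 < ((n : ℝ) + 1) ^ 2 * s ^ α := by
      have := Real.rpow_pos_of_pos hs α; positivity
    have := (hbd _ hx).1
    have hlow : 0 < C₁ / (Real.Gamma (1 - α) * (1 + ((n : ℝ) + 1) ^ 2 * s ^ α)) := by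
      have : (0:ℝ) < 1 + ((n : ℝ) + 1) ^ 2 * s ^ α := by linarith
      positivity
    exact lt_of_lt_of_le hlow (by simpa [hm] using (hbd _ hx).1)
  have hmabs : ∀ (s : ℝ), 0 < s → ∀ n, |m s n| ≤ 1 + C := by
    intro s hs n
    have h : |m s n - 1| ≤ C := by
      simpa [hm] using hbd1 ((n : ℝ) + 1) s (by positivity) hs
    calc |m s n| = |(m s n - 1) + 1| := by ring_nf
      _ ≤ |m s n - 1| + |(1:ℝ)| := abs_add_le _ _
      _ ≤ C + 1 := by rw [abs_one]; linarith
      _ = 1 + C := by ring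
  -- inner square sums
  have haf : HasSum (fun n => ⟪f₀, φ n⟫ ^ 2) (‖f₀‖ ^ 2) :=
    aux_sq_hasSum φ (aux_hasSum_inner_smul φ f₀)
  -- main per-t facts
  have main : ∀ t : ℝ, 0 < t → t < τ →
      (‖f₀ - u' t‖ ≤ ‖f₀ - u t‖ + (C₂ * (1 + τ ^ α) / C₁) * (δ / t ^ α)) ∧
      HasSum (fun n => ((1 - m t n) * ⟪f₀, φ n⟫) ^ 2) (‖f₀ - u t‖ ^ 2) := by
    intro t ht htτ
    have hs : 0 < t ^ α := Real.rpow_pos_of_pos ht α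
    set M : ℝ := C₂ * (1 + τ ^ α) / C₁ / t ^ α with hM
    have hMpos : 0 < M := by
      rw [hM]
      exact div_pos (div_pos (mul_pos hC₂ (by positivity)) hC₁) hs
    set q : ℕ → ℝ := fun n => m t n / m τ n with hq
    have hqpos : ∀ n, 0 < q n := fun n => div_pos (hmpos t ht n) (hmpos τ hτ n)
    have hqle : ∀ n, q n ≤ M := by
      intro n
      set L : ℝ := ((n : ℝ) + 1) ^ 2 with hLdef
      have hL1 : (1 : ℝ) ≤ L := hL n
      have hxt : 0 < L * t ^ α := by positivity
      have hxτ : 0 < L * τ ^ α := by positivity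
      have h1t : (0:ℝ) < 1 + L * t ^ α := by linarith
      have h1τ : (0:ℝ) < 1 + L * τ ^ α := by linarith
      rw [hq, div_le_iff₀ (hmpos τ hτ n)]
      have hub : m t n ≤ C₂ / (Real.Gamma (1 - α) * (1 + L * t ^ α)) := by
        simpa [hm, hLdef] using (hbd _ hxt).2
      have hlb : C₁ / (Real.Gamma (1 - α) * (1 + L * τ ^ α)) ≤ m τ n := by
        simpa [hm, hLdef] using (hbd _ hxτ).1
      have key : t ^ α * (1 + L * τ ^ α) ≤ (1 + τ ^ α) * (1 + L * t ^ α) := by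
        nlinarith [mul_pos hs hr]
      have step : C₂ / (Real.Gamma (1 - α) * (1 + L * t ^ α)) ≤
          M * (C₁ / (Real.Gamma (1 - α) * (1 + L * τ ^ α))) := by
        rw [mul_div_assoc']
        rw [div_le_div_iff₀ (by positivity) (by positivity)]
        have hMC₁ : M * C₁ = C₂ * (1 + τ ^ α) / t ^ α := by
          rw [hM]
          field_simp
        rw [hMC₁, div_mul_eq_mul_div, le_div_iff₀ hs]
        have hCG : (0:ℝ) ≤ C₂ * Real.Gamma (1 - α) := mul_nonneg hC₂.le hG.le
        nlinarith [mul_le_mul_of_nonneg_left key hCG]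
      calc m t n ≤ C₂ / (Real.Gamma (1 - α) * (1 + L * t ^ α)) := hub
        _ ≤ M * (C₁ / (Real.Gamma (1 - α) * (1 + L * τ ^ α))) := step
        _ ≤ M * m τ n := mul_le_mul_of_nonneg_left hlb hMpos.le
    -- summability of the three series
    have hsum : ∀ x : H, Summable fun n => ((q n * ⟪x, φ n⟫) • φ n) := by
      intro x
      apply aux_summable_smul
      have hax : HasSum (fun n => ⟪x, φ n⟫ ^ 2) (‖x‖ ^ 2) :=
        aux_sq_hasSum φ (aux_hasSum_inner_smul φ x)
      refine Summable.of_nonneg_of_le (fun n => sq_nonneg _) (fun n => ?_)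
        (hax.summable.mul_left (M ^ 2))
      have : (q n) ^ 2 ≤ M ^ 2 := by nlinarith [hqpos n, hqle n]
      calc (q n * ⟪x, φ n⟫) ^ 2 = q n ^ 2 * ⟪x, φ n⟫ ^ 2 := by ring
        _ ≤ M ^ 2 * ⟪x, φ n⟫ ^ 2 := mul_le_mul_of_nonneg_right this (sq_nonneg _)
    have hug : HasSum (fun n => (q n * ⟪g, φ n⟫) • φ n) (u t) := by
      rw [hu t ht htτ]; exact (hsum g).hasSum
    have hug' : HasSum (fun n => (q n * ⟪g', φ n⟫) • φ n) (u' t) := by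
      rw [hu' t ht htτ]; exact (hsum g').hasSum
    -- difference
    have hdiff : HasSum (fun n => (q n * ⟪g - g', φ n⟫) • φ n) (u t - u' t) := by
      have h := hug.sub hug'
      refine h.congr_fun fun n => ?_
      rw [inner_sub_left, mul_sub, sub_smul]
    have hnd : ‖u t - u' t‖ ≤ M * δ := by
      have h1 := aux_sq_hasSum φ hdiff
      have h2 := aux_sq_hasSum φ (aux_hasSum_inner_smul φ (g - g'))
      have hle : ‖u t - u' t‖ ^ 2 ≤ M ^ 2 * ‖g - g'‖ ^ 2 := by
        refine hasSum_le (fun n => ?_) h1 (h2.mul_left (M ^ 2))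
        have : (q n) ^ 2 ≤ M ^ 2 := by nlinarith [hqpos n, hqle n]
        calc (q n * ⟪g - g', φ n⟫) ^ 2 = q n ^ 2 * ⟪g - g', φ n⟫ ^ 2 := by ring
          _ ≤ M ^ 2 * ⟪g - g', φ n⟫ ^ 2 := mul_le_mul_of_nonneg_right this (sq_nonneg _)
      have h3 : ‖u t - u' t‖ ^ 2 ≤ (M * δ) ^ 2 := by
        have hgd : ‖g - g'‖ ^ 2 ≤ δ ^ 2 := by nlinarith [norm_nonneg (g - g')]
        calc ‖u t - u' t‖ ^ 2 ≤ M ^ 2 * ‖g - g'‖ ^ 2 := hle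
          _ ≤ M ^ 2 * δ ^ 2 := mul_le_mul_of_nonneg_left hgd (sq_nonneg M)
          _ = (M * δ) ^ 2 := by ring
      nlinarith [norm_nonneg (u t - u' t), mul_pos hMpos hδ]
    have part1 : ‖f₀ - u' t‖ ≤ ‖f₀ - u t‖ + (C₂ * (1 + τ ^ α) / C₁) * (δ / t ^ α) := by
      have heq : M * δ = C₂ * (1 + τ ^ α) / C₁ * (δ / t ^ α) := by
        rw [hM]; field_simp
      calc ‖f₀ - u' t‖ = ‖(f₀ - u t) + (u t - u' t)‖ := by congr 1; abel
        _ ≤ ‖f₀ - u t‖ + ‖u t - u' t‖ := norm_add_le _ _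
        _ ≤ ‖f₀ - u t‖ + M * δ := by linarith
        _ = ‖f₀ - u t‖ + C₂ * (1 + τ ^ α) / C₁ * (δ / t ^ α) := by rw [heq]
    -- second component
    have hcoeff : ∀ n, q n * ⟪g, φ n⟫ = m t n * ⟪f₀, φ n⟫ := by
      intro n
      have hne : m τ n ≠ 0 := (hmpos τ hτ n).ne'
      rw [hf₀ n]
      show m t n / m τ n * (m τ n * ⟪f₀, φ n⟫) = m t n * ⟪f₀, φ n⟫
      field_simp
    have huf : HasSum (fun n => (m t n * ⟪f₀, φ n⟫) • φ n) (u t) := by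
      refine hug.congr_fun fun n => by rw [hcoeff n]
    have hdiff2 : HasSum (fun n => ((1 - m t n) * ⟪f₀, φ n⟫) • φ n) (f₀ - u t) := by
      have h := (aux_hasSum_inner_smul φ f₀).sub huf
      refine h.congr_fun fun n => ?_
      rw [← sub_smul]; congr 1; ring
    exact ⟨part1, aux_sq_hasSum φ hdiff2⟩
  refine ⟨fun t ht htτ => (main t ht htτ).1, ?_⟩
  -- convergence part
  set F : ℝ → ℝ := fun t => ∑' n, ((1 - m t n) * ⟪f₀, φ n⟫) ^ 2 with hF
  have hFlim : Filter.Tendsto F (nhdsWithin 0 (Set.Ioi 0)) (nhds 0) := by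
    have h := tendsto_tsum_of_dominated_convergence
      (𝓕 := nhdsWithin (0:ℝ) (Set.Ioi 0))
      (f := fun (t : ℝ) (n : ℕ) => ((1 - m t n) * ⟪f₀, φ n⟫) ^ 2)
      (g := fun _ : ℕ => (0:ℝ))
      (bound := fun n => (1 + C) ^ 2 * ⟪f₀, φ n⟫ ^ 2)
      (haf.summable.mul_left _) ?_ ?_
    · simpa [hF] using h
    · intro n
      have h1 := hlim ((n : ℝ) + 1) (by positivity)
      have h2 : Filter.Tendsto (fun t : ℝ => ((1 - m t n) * ⟪f₀, φ n⟫) ^ 2)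
          (nhdsWithin 0 (Set.Ioi 0)) (nhds (((1 - 1) * ⟪f₀, φ n⟫) ^ 2)) := by
        exact (((tendsto_const_nhds.sub h1).mul tendsto_const_nhds).pow 2)
      simpa using h2
    · filter_upwards [self_mem_nhdsWithin] with t ht
      intro n
      have ht' : (0:ℝ) < t := ht
      have hb := hbd1 ((n : ℝ) + 1) t (by positivity) ht'
      have hb' : |1 - m t n| ≤ 1 + C := by
        rw [abs_sub_comm]
        calc |m t n - 1| ≤ C := by simpa [hm] using hb
          _ ≤ 1 + C := by linarith
      have h1 : (1 - m t n) ^ 2 ≤ (1 + C) ^ 2 := by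
        have := sq_abs (1 - m t n)
        nlinarith [abs_nonneg (1 - m t n)]
      calc ‖((1 - m t n) * ⟪f₀, φ n⟫) ^ 2‖ = (1 - m t n) ^ 2 * ⟪f₀, φ n⟫ ^ 2 := by
            rw [Real.norm_eq_abs, abs_of_nonneg (sq_nonneg _)]; ring
        _ ≤ (1 + C) ^ 2 * ⟪f₀, φ n⟫ ^ 2 := mul_le_mul_of_nonneg_right h1 (sq_nonneg _)
  have hsqrt : Filter.Tendsto (fun t => Real.sqrt (F t)) (nhdsWithin 0 (Set.Ioi 0)) (nhds 0) := by
    have := (Real.continuous_sqrt.tendsto 0).comp hFlim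
    simpa [Function.comp_def] using this
  refine hsqrt.congr' ?_
  filter_upwards [Ioo_mem_nhdsGT_of_mem (Set.mem_Ico.mpr ⟨le_refl (0:ℝ), hτ⟩)] with t ht
  obtain ⟨ht0, htτ⟩ := ht
  have h2 := (main t ht0 htτ).2
  rw [hF]
  show Real.sqrt (∑' n, ((1 - m t n) * ⟪f₀, φ n⟫) ^ 2) = ‖f₀ - u t‖
  rw [h2.tsum_eq]
  exact Real.sqrt_sq (norm_nonneg _)
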